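/- For the folding pair (E_6, F_4) with σ-stable Cartan 𝔱, 𝔱_𝔨 = 𝔱^σ, restriction map ρ: 𝔱* → 𝔱_𝔨*, fundamental weights ϖ_1,…,ϖ_6 of E_6 (Bourbaki numbering) and ν_1,…,ν_4 of F_4: the weight 2ν_1 is not a 𝔱_𝔨-weight of the restriction to 𝔨 of the irreducible E_6-module V(ϖ_4). Equivalently, there is no weight μ of V(ϖ_4) of the form μ = aϖ_1 + 2ϖ_2 + bϖ_3 − bϖ_5 − aϖ_6 with a, b ∈ ℤ. -/
import Mathlib


noncomputable section

/-- **`2ν₁` is not a weight of the restriction to `F₄` of the `E₆`-module `V(ϖ₄)`**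
(Bushek–Kumar, proof of Theorem 3.1, Case V).  We work in the root lattice of `E₆` (Bourbaki
numbering, `0`-based), realized inside `ℚ⁶` with the simple roots `α i` the standard basis
vectors and the fundamental weights `ϖ i` given by their expressions in the simple roots
(Bourbaki, Planche V).  Every weight `μ` of the 2925-dimensional module `V(ϖ₄)` has the form
`μ = ϖ₄ - Σᵢ dᵢ αᵢ` with `dᵢ ∈ ℕ`; and no such vector — in particular no weight of
`V(ϖ₄)` — has the form `a ϖ₁ + 2 ϖ₂ + b ϖ₃ - b ϖ₅ - a ϖ₆` with `a, b ∈ ℤ`, which is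
precisely the condition for its restriction to `t_k = t^σ` to equal `2ν₁`. -/
theorem weight_2nu1_not_in_E6_module_Vpi4 :
    ∀ α ϖ : Fin 6 → Fin 6 → ℚ,
      (∀ i, α i = Pi.single i 1) →
      ϖ 0 = (4/3 : ℚ) • α 0 + 1 • α 1 + (5/3 : ℚ) • α 2 + 2 • α 3 +
        (4/3 : ℚ) • α 4 + (2/3 : ℚ) • α 5 →
      ϖ 1 = 1 • α 0 + 2 • α 1 + 2 • α 2 + 3 • α 3 + 2 • α 4 + 1 • α 5 →
      ϖ 2 = (5/3 : ℚ) • α 0 + 2 • α 1 + (10/3 : ℚ) • α 2 + 4 • α 3 +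
        (8/3 : ℚ) • α 4 + (4/3 : ℚ) • α 5 →
      ϖ 3 = 2 • α 0 + 3 • α 1 + 4 • α 2 + 6 • α 3 + 4 • α 4 + 2 • α 5 →
      ϖ 4 = (4/3 : ℚ) • α 0 + 2 • α 1 + (8/3 : ℚ) • α 2 + 4 • α 3 +
        (10/3 : ℚ) • α 4 + (5/3 : ℚ) • α 5 →
      ϖ 5 = (2/3 : ℚ) • α 0 + 1 • α 1 + (4/3 : ℚ) • α 2 + 2 • α 3 +
        (5/3 : ℚ) • α 4 + (4/3 : ℚ) • α 5 →
      ∀ μ : Fin 6 → ℚ,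
        (∃ d : Fin 6 → ℕ, μ = ϖ 3 - ∑ i, (d i : ℚ) • α i) →
        ¬ ∃ a b : ℤ, μ = (a : ℚ) • ϖ 0 + (2 : ℚ) • ϖ 1 + (b : ℚ) • ϖ 2
          - (b : ℚ) • ϖ 4 - (a : ℚ) • ϖ 5 := by
  rintro α ϖ hα h0 h1 h2 h3 h4 h5 μ ⟨d, hd⟩ ⟨a, b, hab⟩
  have key := congrFun (hd.symm.trans hab) 1
  simp only [hα, h0, h1, h2, h3, h4, h5, Fin.sum_univ_six, Pi.add_apply, Pi.sub_apply,
    Pi.smul_apply, Pi.single_apply, smul_eq_mul] at key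
  simp only [Fin.reduceEq, if_false, Nat.cast_ofNat] at key
  norm_num at key
  have : (0 : ℚ) ≤ (d 1 : ℚ) := Nat.cast_nonneg _
  linarith
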